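/- Let d ≥ 2 and let ⟨·⟩_d denote the normalized average over [0,2π]^{d+1}. Then ⟨φ_d²⟩_d = d(d+1)/4 and ⟨φ_d³⟩_d = (3/2)·binom(d+1, 3). -/

import Mathlib

open MeasureTheory Real

noncomputable section

/-- The simplex profile `φ_d(θ) = Σ_{0 ≤ i < j ≤ d} cos(θᵢ − θⱼ)`. -/
def phiSimplex (d : ℕ) (θ : Fin (d + 1) → ℝ) : ℝ :=
  ∑ p ∈ Finset.univ.filter (fun p : Fin (d + 1) × Fin (d + 1) => p.1 < p.2),
    Real.cos (θ p.1 - θ p.2)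

/-- Normalized average `⟨G⟩_d = (2π)^{−(d+1)} ∫_{[0,2π]^{d+1}} G`. -/
def avgSimplex (d : ℕ) (G : (Fin (d + 1) → ℝ) → ℝ) : ℝ :=
  ((2 * π) ^ (d + 1))⁻¹ *
    ∫ θ in Set.pi Set.univ (fun _ : Fin (d + 1) => Set.Icc (0 : ℝ) (2 * π)), G θ

namespace SimplexMomentsAux

open Finset

variable {d : ℕ}

/-! ### Combinatorial key lemmas -/

theorem key2 {n : ℕ} {a b c e : Fin n} (hab : a ≠ b) (hce : c ≠ e)
    (h : (Pi.single a 1 - Pi.single b 1 : Fin n → ℤ) + (Pi.single c 1 - Pi.single e 1) = 0) :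
    c = b ∧ e = a := by
  have H : ∀ i : Fin n, ((if i = a then (1:ℤ) else 0) - (if i = b then 1 else 0)) +
      ((if i = c then (1:ℤ) else 0) - (if i = e then 1 else 0)) = 0 := by
    intro i
    have := congrFun h i
    simpa [Pi.single_apply] using this
  have hea : e = a := by
    by_contra hne
    have h' := H a
    rw [if_pos rfl, if_neg hab, if_neg (fun hh : a = e => hne hh.symm)] at h'
    split_ifs at h' <;> omega
  have hcb : c = b := by
    by_contra hne
    have h' := H c
    rw [if_pos rfl, if_neg hne, if_neg hce] at h'
    split_ifs at h' <;> omega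
  exact ⟨hcb, hea⟩

theorem key3 {n : ℕ} {a b c e f g : Fin n} (hab : a ≠ b) (hce : c ≠ e) (hfg : f ≠ g)
    (h : (Pi.single a 1 - Pi.single b 1 : Fin n → ℤ) + (Pi.single c 1 - Pi.single e 1)
        + (Pi.single f 1 - Pi.single g 1) = 0) :
    (c = b ∧ e ≠ a ∧ f = e ∧ g = a) ∨ (e = a ∧ c ≠ b ∧ f = b ∧ g = c) := by
  have H : ∀ i : Fin n, ((if i = a then (1:ℤ) else 0) - (if i = b then 1 else 0)) +
      ((if i = c then (1:ℤ) else 0) - (if i = e then 1 else 0)) +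
      ((if i = f then (1:ℤ) else 0) - (if i = g then 1 else 0)) = 0 := by
    intro i
    have := congrFun h i
    simpa [Pi.single_apply] using this
  by_cases hcb : c = b
  · subst hcb
    left
    by_cases hea : e = a
    · exfalso
      subst hea
      have h' := H f
      rw [if_pos rfl, if_neg hfg] at h'
      split_ifs at h' <;> omega
    · refine ⟨rfl, hea, ?_, ?_⟩
      · by_contra hne
        have h' := H e
        rw [if_neg (fun hh : e = a => hea hh), if_neg (fun hh : e = c => hce hh.symm),
          if_pos rfl, if_neg (fun hh : e = f => hne hh.symm)] at h'
        split_ifs at h' <;> omega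
      · by_contra hne
        have h' := H a
        rw [if_pos rfl, if_neg hab, if_neg (fun hh : a = e => hea hh.symm),
          if_neg (fun hh : a = g => hne hh.symm)] at h'
        split_ifs at h' <;> omega
  · right
    have hgc : g = c := by
      by_contra hne
      have h' := H c
      rw [if_neg hcb, if_pos rfl, if_neg hce, if_neg (fun hh : c = g => hne hh.symm)] at h'
      split_ifs at h' <;> omega
    have hca : c ≠ a := by
      intro hh
      have h' := H c
      rw [if_pos hh, if_neg hcb, if_pos rfl, if_neg hce, if_pos hgc.symm] at h'
      split_ifs at h' <;> omega
    have hcf : c ≠ f := by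
      intro hh
      have h' := H c
      rw [if_neg hcb, if_pos rfl, if_neg hce, if_pos hh, if_pos hgc.symm] at h'
      split_ifs at h' <;> omega
    have hea : e = a := by
      by_contra hne
      have h' := H a
      rw [if_pos rfl, if_neg hab, if_neg (fun hh : a = c => hca hh.symm),
        if_neg (fun hh : a = e => hne hh.symm),
        if_neg (fun hh : a = g => hca (hgc ▸ hh).symm)] at h'
      split_ifs at h' <;> omega
    have haf : a ≠ f := by
      intro hh
      have h' := H a
      rw [if_pos rfl, if_neg hab, if_neg (fun hh2 : a = c => hca hh2.symm),
        if_pos hea.symm, if_pos hh,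
        if_neg (fun hh2 : a = g => hca (hgc ▸ hh2).symm)] at h'
      omega
    have hfb : f = b := by
      by_contra hne
      have h' := H f
      rw [if_neg (fun hh : f = a => haf hh.symm), if_neg hne,
        if_neg (fun hh : f = c => hcf hh.symm),
        if_neg (fun hh : f = e => haf (hea ▸ hh).symm),
        if_pos rfl, if_neg hfg] at h'
      omega
    exact ⟨hea, hcb, hfb, hgc⟩

/-! ### Exponentials and their integrals -/

def eev (d : ℕ) (n : Fin (d+1) → ℤ) (θ : Fin (d+1) → ℝ) : ℂ :=
  ∏ i, Complex.exp ((n i : ℂ) * (θ i : ℂ) * Complex.I)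

def tbox (d : ℕ) : Set (Fin (d+1) → ℝ) := Set.pi Set.univ fun _ => Set.Icc 0 (2*π)

lemma eev_continuous (n : Fin (d+1) → ℤ) : Continuous (eev d n) := by
  unfold eev; fun_prop

lemma eev_add (m n : Fin (d+1) → ℤ) (θ : Fin (d+1) → ℝ) :
    eev d (m + n) θ = eev d m θ * eev d n θ := by
  unfold eev
  rw [← Finset.prod_mul_distrib]
  refine Finset.prod_congr rfl fun i _ => ?_
  rw [← Complex.exp_add]
  congr 1
  simp only [Pi.add_apply]
  push_cast
  ring

lemma tbox_compact : IsCompact (tbox d) := isCompact_univ_pi fun _ => isCompact_Icc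
lemma tbox_meas : MeasurableSet (tbox d) := MeasurableSet.univ_pi fun _ => measurableSet_Icc

lemma eev_integrableOn (n : Fin (d+1) → ℤ) : IntegrableOn (eev d n) (tbox d) :=
  (eev_continuous n).continuousOn.integrableOn_compact tbox_compact

lemma int1 (k : ℤ) :
    ∫ t in Set.Icc (0:ℝ) (2*π), Complex.exp ((k:ℂ) * t * Complex.I) =
      if k = 0 then ((2*π : ℝ) : ℂ) else 0 := by
  rw [MeasureTheory.integral_Icc_eq_integral_Ioc,
      ← intervalIntegral.integral_of_le (by positivity : (0:ℝ) ≤ 2*π)]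
  by_cases hk : k = 0
  · simp [hk]
  · have hc : (k:ℂ) * Complex.I ≠ 0 := mul_ne_zero (Int.cast_ne_zero.2 hk) Complex.I_ne_zero
    rw [if_neg hk]
    have hrw : ∀ t : ℝ, (k:ℂ) * t * Complex.I = ((k:ℂ) * Complex.I) * t := fun t => by ring
    simp only [hrw]
    rw [integral_exp_mul_complex hc]
    have h1 : (k:ℂ) * Complex.I * ((2:ℝ)*π : ℝ) = (k:ℤ) * (2 * (π:ℂ) * Complex.I) := by
      push_cast; ring
    rw [h1, Complex.exp_int_mul_two_pi_mul_I]
    simp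

lemma eev_integral (n : Fin (d+1) → ℤ) :
    ∫ θ in tbox d, eev d n θ = if n = 0 then (((2*π)^(d+1) : ℝ) : ℂ) else 0 := by
  have h1 : ∫ θ in tbox d, eev d n θ
      = ∫ θ : Fin (d+1) → ℝ, ∏ i, (Set.Icc (0:ℝ) (2*π)).indicator
          (fun t => Complex.exp ((n i : ℂ) * t * Complex.I)) (θ i) := by
    rw [← integral_indicator tbox_meas]
    congr 1; funext θ
    by_cases hθ : θ ∈ tbox d
    · rw [Set.indicator_of_mem hθ]
      simp only [tbox, Set.mem_pi, Set.mem_univ, forall_true_left] at hθ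
      exact Finset.prod_congr rfl fun i _ =>
        (Set.indicator_of_mem (hθ i) fun t => Complex.exp ((n i : ℂ) * t * Complex.I)).symm
    · rw [Set.indicator_of_notMem hθ]
      simp only [tbox, Set.mem_pi, Set.mem_univ, forall_true_left] at hθ
      push_neg at hθ
      obtain ⟨i, hi⟩ := hθ
      exact (Finset.prod_eq_zero (Finset.mem_univ i) (Set.indicator_of_notMem hi _)).symm
  rw [h1, MeasureTheory.integral_fintype_prod_volume_eq_prod]
  have h2 : ∀ i : Fin (d+1), (∫ t : ℝ, (Set.Icc (0:ℝ) (2*π)).indicator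
      (fun t => Complex.exp ((n i : ℂ) * t * Complex.I)) t)
        = if n i = 0 then ((2*π:ℝ):ℂ) else 0 := by
    intro i
    rw [integral_indicator measurableSet_Icc]
    exact int1 (n i)
  simp only [h2]
  by_cases hn : n = 0
  · subst hn
    simp only [Pi.zero_apply, if_pos rfl, Finset.prod_const, Finset.card_univ,
      Fintype.card_fin]
    push_cast
    ring
  · obtain ⟨i, hi⟩ := Function.ne_iff.1 hn
    rw [Pi.zero_apply] at hi
    rw [if_neg hn]
    exact Finset.prod_eq_zero (Finset.mem_univ i) (by simp [hi])

/-! ### φ as a combination of exponentials -/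

def uvec (d : ℕ) (p : Fin (d+1) × Fin (d+1)) : Fin (d+1) → ℤ :=
  Pi.single p.1 1 - Pi.single p.2 1

def Dset (d : ℕ) : Finset (Fin (d+1) × Fin (d+1)) :=
  Finset.univ.filter fun p => p.1 ≠ p.2

lemma mem_Dset {p : Fin (d+1) × Fin (d+1)} : p ∈ Dset d ↔ p.1 ≠ p.2 := by
  simp [Dset]

lemma eev_uvec (p : Fin (d+1) × Fin (d+1)) (θ : Fin (d+1) → ℝ) :
    eev d (uvec d p) θ = Complex.exp (((θ p.1 - θ p.2 : ℝ) : ℂ) * Complex.I) := by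
  unfold eev
  rw [← Complex.exp_sum]
  congr 1
  have h : ∀ i : Fin (d+1), ((uvec d p i : ℤ) : ℂ) * (θ i : ℂ) * Complex.I =
      (if i = p.1 then (θ i : ℂ) * Complex.I else 0) -
      (if i = p.2 then (θ i : ℂ) * Complex.I else 0) := by
    intro i
    simp only [uvec, Pi.sub_apply, Pi.single_apply]
    split_ifs <;> push_cast <;> ring
  simp only [h]
  rw [Finset.sum_sub_distrib, Finset.sum_ite_eq' Finset.univ p.1,
    Finset.sum_ite_eq' Finset.univ p.2]
  simp only [Finset.mem_univ, if_pos]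
  push_cast
  ring

lemma phi_complex (θ : Fin (d+1) → ℝ) :
    ((phiSimplex d θ : ℝ) : ℂ) = (1/2) * ∑ p ∈ Dset d, eev d (uvec d p) θ := by
  have hsplit : Dset d = (Finset.univ.filter fun p : Fin (d+1) × Fin (d+1) => p.1 < p.2) ∪
      (Finset.univ.filter fun p : Fin (d+1) × Fin (d+1) => p.2 < p.1) := by
    ext p
    simp only [Dset, Finset.mem_filter, Finset.mem_univ, true_and, Finset.mem_union]
    exact ne_iff_lt_or_gt
  have hdisj : Disjoint (Finset.univ.filter fun p : Fin (d+1) × Fin (d+1) => p.1 < p.2)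
      (Finset.univ.filter fun p : Fin (d+1) × Fin (d+1) => p.2 < p.1) :=
    Finset.disjoint_filter.2 fun p _ h1 h2 => absurd h2 (lt_asymm h1)
  rw [hsplit, Finset.sum_union hdisj]
  have hswap : ∑ p ∈ (Finset.univ.filter fun p : Fin (d+1) × Fin (d+1) => p.2 < p.1),
      eev d (uvec d p) θ
      = ∑ p ∈ (Finset.univ.filter fun p : Fin (d+1) × Fin (d+1) => p.1 < p.2),
      eev d (uvec d (p.2, p.1)) θ := by
    refine Finset.sum_nbij' (fun p => (p.2, p.1)) (fun p => (p.2, p.1)) ?_ ?_ ?_ ?_ ?_ <;>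
      simp [Finset.mem_filter]
  rw [hswap, ← Finset.sum_add_distrib, Finset.mul_sum, phiSimplex]
  push_cast
  refine Finset.sum_congr rfl fun p hp => ?_
  rw [eev_uvec, eev_uvec]
  have h2 : ((θ p.1 : ℂ) - (θ p.2 : ℂ)) = ((θ p.1 - θ p.2 : ℝ) : ℂ) := by push_cast; ring
  rw [h2, Complex.cos]
  push_cast
  ring_nf

/-! ### The iff characterizations -/

lemma L2iff {p q : Fin (d+1) × Fin (d+1)} (hp : p.1 ≠ p.2) (hq : q.1 ≠ q.2) :
    uvec d p + uvec d q = 0 ↔ q = (p.2, p.1) := by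
  constructor
  · intro h
    obtain ⟨h1, h2⟩ := key2 hp hq h
    exact Prod.ext h1 h2
  · rintro rfl
    simp only [uvec]
    abel

lemma L3iff {p q r : Fin (d+1) × Fin (d+1)} (hp : p.1 ≠ p.2) (hq : q.1 ≠ q.2)
    (hr : r.1 ≠ r.2) :
    uvec d p + uvec d q + uvec d r = 0 ↔
      ((q.1 = p.2 ∧ q.2 ≠ p.1 ∧ r = (q.2, p.1)) ∨ (q.2 = p.1 ∧ q.1 ≠ p.2 ∧ r = (p.2, q.1))) := by
  constructor
  · intro h
    rcases key3 hp hq hr h with ⟨h1, h2, h3, h4⟩ | ⟨h1, h2, h3, h4⟩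
    · exact Or.inl ⟨h1, h2, Prod.ext h3 h4⟩
    · exact Or.inr ⟨h1, h2, Prod.ext h3 h4⟩
  · rintro (⟨h1, _, rfl⟩ | ⟨h1, _, rfl⟩) <;>
      · simp only [uvec]
        rw [h1]
        abel

/-! ### Counting cards -/

lemma card_Dset_real : ((Dset d).card : ℝ) = ((d:ℝ) + 1) * d := by
  have h : Dset d = (Finset.univ : Finset (Fin (d+1))).offDiag := by
    ext p
    simp [Dset, Finset.mem_offDiag]
  rw [h, Finset.offDiag_card, Finset.card_univ, Fintype.card_fin]
  have hle : (d+1) ≤ (d+1)*(d+1) := Nat.le_mul_of_pos_left _ (Nat.succ_pos d)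
  rw [Nat.cast_sub hle]
  push_cast
  ring

end SimplexMomentsAux

open SimplexMomentsAux Finset

/-- `⟨φ_d²⟩_d = d(d+1)/4` and `⟨φ_d³⟩_d = (3/2)·C(d+1,3)`. -/
theorem simplex_moments (d : ℕ) (hd : 2 ≤ d) :
    avgSimplex d (fun θ => (phiSimplex d θ) ^ 2) = (d : ℝ) * ((d : ℝ) + 1) / 4 ∧
    avgSimplex d (fun θ => (phiSimplex d θ) ^ 3) = (3 / 2) * (Nat.choose (d + 1) 3 : ℝ) := by
  have hbox : (Set.pi Set.univ fun _ : Fin (d+1) => Set.Icc (0:ℝ) (2*π)) = tbox d := rfl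
  set X : ℂ := (((2*π)^(d+1) : ℝ) : ℂ) with hX
  have h2pi : ((2:ℝ) * π) ^ (d+1) ≠ 0 := by positivity
  -- integrability of the constant-multiple exponentials
  have hint : ∀ (n : Fin (d+1) → ℤ) (c : ℂ),
      Integrable (fun θ => c * eev d n θ) (volume.restrict (tbox d)) :=
    fun n c => (eev_integrableOn n).const_mul c
  constructor
  · -- square
    have hC : ∫ θ in tbox d, ((phiSimplex d θ : ℝ) : ℂ)^2
        = ((((d:ℝ)+1) * d / 4 * (2*π)^(d+1) : ℝ) : ℂ) := by
      have hexp : ∀ θ : Fin (d+1) → ℝ, ((phiSimplex d θ : ℝ) : ℂ)^2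
          = ∑ p ∈ Dset d, ∑ q ∈ Dset d, (1/4 : ℂ) * eev d (uvec d p + uvec d q) θ := by
        intro θ
        rw [phi_complex, mul_pow, sq (∑ p ∈ Dset d, eev d (uvec d p) θ), Finset.sum_mul_sum]
        rw [Finset.mul_sum]
        refine Finset.sum_congr rfl fun p _ => ?_
        rw [Finset.mul_sum]
        refine Finset.sum_congr rfl fun q _ => ?_
        rw [eev_add]
        ring
      simp only [hexp]
      rw [integral_finset_sum _ (fun p _ => integrable_finset_sum _ (fun q _ => hint _ _))]
      have hstep : ∀ p ∈ Dset d, (∫ θ in tbox d, ∑ q ∈ Dset d,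
          (1/4 : ℂ) * eev d (uvec d p + uvec d q) θ) = (1/4 : ℂ) * X := by
        intro p hp
        have hp' := mem_Dset.1 hp
        rw [integral_finset_sum _ (fun q _ => hint _ _)]
        have : ∀ q ∈ Dset d, (∫ θ in tbox d, (1/4 : ℂ) * eev d (uvec d p + uvec d q) θ)
            = if q = (p.2, p.1) then (1/4 : ℂ) * X else 0 := by
          intro q hq
          have hq' := mem_Dset.1 hq
          rw [MeasureTheory.integral_const_mul, eev_integral, if_congr (L2iff hp' hq') rfl rfl]
          split_ifs <;> ring
        rw [Finset.sum_congr rfl this, Finset.sum_ite_eq' (Dset d) (p.2, p.1)]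
        rw [if_pos (mem_Dset.2 hp'.symm)]
      rw [Finset.sum_congr rfl hstep, Finset.sum_const, nsmul_eq_mul]
      have hcast : ((Dset d).card : ℂ) = ((d:ℂ) + 1) * d := by
        have := card_Dset_real (d := d)
        push_cast at this ⊢
        exact_mod_cast congrArg (fun x : ℝ => (x : ℂ)) this
      rw [hcast, hX]
      push_cast
      ring
    have hR : (∫ θ in tbox d, (phiSimplex d θ)^2)
        = ((d:ℝ)+1) * d / 4 * (2*π)^(d+1) := by
      apply Complex.ofReal_injective
      have hcoe : ((∫ θ in tbox d, (phiSimplex d θ)^2 : ℝ) : ℂ)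
          = ∫ θ in tbox d, (((phiSimplex d θ)^2 : ℝ) : ℂ) := integral_ofReal.symm
      rw [hcoe]
      simp only [Complex.ofReal_pow]
      exact hC
    rw [avgSimplex, hbox, hR]
    field_simp
  · -- cube
    have hC : ∫ θ in tbox d, ((phiSimplex d θ : ℝ) : ℂ)^3
        = ((((d:ℝ)+1) * d * ((d:ℝ)-1) / 4 * (2*π)^(d+1) : ℝ) : ℂ) := by
      have hexp : ∀ θ : Fin (d+1) → ℝ, ((phiSimplex d θ : ℝ) : ℂ)^3
          = ∑ p ∈ Dset d, ∑ q ∈ Dset d, ∑ r ∈ Dset d,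
              (1/8 : ℂ) * eev d (uvec d p + uvec d q + uvec d r) θ := by
        intro θ
        rw [phi_complex, mul_pow, pow_succ (∑ p ∈ Dset d, eev d (uvec d p) θ) 2,
          sq (∑ p ∈ Dset d, eev d (uvec d p) θ), Finset.sum_mul_sum, Finset.sum_mul,
          Finset.mul_sum]
        refine Finset.sum_congr rfl fun p _ => ?_
        rw [Finset.sum_mul, Finset.mul_sum]
        refine Finset.sum_congr rfl fun q _ => ?_
        rw [Finset.mul_sum, Finset.mul_sum]
        refine Finset.sum_congr rfl fun r _ => ?_
        rw [eev_add, eev_add]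
        ring
      simp only [hexp]
      rw [integral_finset_sum _ (fun p _ => integrable_finset_sum _
        (fun q _ => integrable_finset_sum _ (fun r _ => hint _ _)))]
      have hstep : ∀ p ∈ Dset d, (∫ θ in tbox d, ∑ q ∈ Dset d, ∑ r ∈ Dset d,
          (1/8 : ℂ) * eev d (uvec d p + uvec d q + uvec d r) θ)
            = (2 * (d - 1 : ℕ)) * ((1/8 : ℂ) * X) := by
        intro p hp
        have hp' := mem_Dset.1 hp
        rw [integral_finset_sum _ (fun q _ => integrable_finset_sum _ (fun r _ => hint _ _))]
        have hinner : ∀ q ∈ Dset d, (∫ θ in tbox d, ∑ r ∈ Dset d,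
            (1/8 : ℂ) * eev d (uvec d p + uvec d q + uvec d r) θ)
              = (if q.1 = p.2 ∧ q.2 ≠ p.1 then (1/8 : ℂ) * X else 0)
                + (if q.2 = p.1 ∧ q.1 ≠ p.2 then (1/8 : ℂ) * X else 0) := by
          intro q hq
          have hq' := mem_Dset.1 hq
          rw [integral_finset_sum _ (fun r _ => hint _ _)]
          have hterm : ∀ r ∈ Dset d, (∫ θ in tbox d,
              (1/8 : ℂ) * eev d (uvec d p + uvec d q + uvec d r) θ)
                = if ((q.1 = p.2 ∧ q.2 ≠ p.1 ∧ r = (q.2, p.1)) ∨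
                    (q.2 = p.1 ∧ q.1 ≠ p.2 ∧ r = (p.2, q.1)))
                  then (1/8 : ℂ) * X else 0 := by
            intro r hr
            have hr' := mem_Dset.1 hr
            rw [MeasureTheory.integral_const_mul, eev_integral, if_congr (L3iff hp' hq' hr') rfl rfl]
            split_ifs <;> ring
          rw [Finset.sum_congr rfl hterm]
          by_cases hA : q.1 = p.2 ∧ q.2 ≠ p.1
          · have hB : ¬(q.2 = p.1 ∧ q.1 ≠ p.2) := fun hB => hA.2 hB.1
            have : ∀ r ∈ Dset d, (if ((q.1 = p.2 ∧ q.2 ≠ p.1 ∧ r = (q.2, p.1)) ∨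
                (q.2 = p.1 ∧ q.1 ≠ p.2 ∧ r = (p.2, q.1))) then (1/8 : ℂ) * X else 0)
                  = if r = (q.2, p.1) then (1/8 : ℂ) * X else 0 := by
              intro r _
              refine if_congr ?_ rfl rfl
              constructor
              · rintro (⟨_, _, h⟩ | ⟨h1, h2, _⟩)
                · exact h
                · exact absurd ⟨h1, h2⟩ hB
              · intro h
                exact Or.inl ⟨hA.1, hA.2, h⟩
            rw [Finset.sum_congr rfl this, Finset.sum_ite_eq' (Dset d) (q.2, p.1),
              if_pos (mem_Dset.2 hA.2), if_pos hA, if_neg hB, add_zero]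
          · by_cases hB : q.2 = p.1 ∧ q.1 ≠ p.2
            · have : ∀ r ∈ Dset d, (if ((q.1 = p.2 ∧ q.2 ≠ p.1 ∧ r = (q.2, p.1)) ∨
                  (q.2 = p.1 ∧ q.1 ≠ p.2 ∧ r = (p.2, q.1))) then (1/8 : ℂ) * X else 0)
                    = if r = (p.2, q.1) then (1/8 : ℂ) * X else 0 := by
                intro r _
                refine if_congr ?_ rfl rfl
                constructor
                · rintro (⟨h1, h2, _⟩ | ⟨_, _, h⟩)
                  · exact absurd ⟨h1, h2⟩ hA
                  · exact h
                · intro h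
                  exact Or.inr ⟨hB.1, hB.2, h⟩
              rw [Finset.sum_congr rfl this, Finset.sum_ite_eq' (Dset d) (p.2, q.1),
                if_pos (mem_Dset.2 (fun hh => hB.2 hh.symm)), if_neg hA, if_pos hB, zero_add]
            · have : ∀ r ∈ Dset d, (if ((q.1 = p.2 ∧ q.2 ≠ p.1 ∧ r = (q.2, p.1)) ∨
                  (q.2 = p.1 ∧ q.1 ≠ p.2 ∧ r = (p.2, q.1))) then (1/8 : ℂ) * X else 0)
                    = 0 := by
                intro r _
                rw [if_neg]
                rintro (⟨h1, h2, _⟩ | ⟨h1, h2, _⟩)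
                · exact hA ⟨h1, h2⟩
                · exact hB ⟨h1, h2⟩
              rw [Finset.sum_congr rfl this, Finset.sum_const, smul_zero, if_neg hA,
                if_neg hB, add_zero]
        rw [Finset.sum_congr rfl hinner, Finset.sum_add_distrib]
        have hcard1 : (Finset.filter (fun q : Fin (d+1) × Fin (d+1) =>
            q.1 = p.2 ∧ q.2 ≠ p.1) (Dset d)).card = d - 1 := by
          have hbij : (Finset.filter (fun q : Fin (d+1) × Fin (d+1) =>
              q.1 = p.2 ∧ q.2 ≠ p.1) (Dset d)).card
                = (Finset.univ.filter fun j : Fin (d+1) => j ≠ p.1 ∧ j ≠ p.2).card := by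
            refine Finset.card_nbij' (fun q => q.2) (fun j => (p.2, j)) ?_ ?_ ?_ ?_
            · intro q hq
              obtain ⟨hqD, hq1, hq2⟩ := Finset.mem_filter.1 hq
              have hq' := mem_Dset.1 hqD
              exact Finset.mem_filter.2 ⟨Finset.mem_univ _, hq2,
                fun hh => hq' (hq1.trans hh.symm)⟩
            · intro j hj
              obtain ⟨-, hj1, hj2⟩ := Finset.mem_filter.1 hj
              exact Finset.mem_filter.2 ⟨mem_Dset.2 fun hh => hj2 hh.symm, rfl, hj1⟩
            · intro q hq
              obtain ⟨hqD, hq1, hq2⟩ := Finset.mem_filter.1 hq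
              exact Prod.ext hq1.symm rfl
            · intro j _
              rfl
          rw [hbij]
          have hset : (Finset.univ.filter fun j : Fin (d+1) => j ≠ p.1 ∧ j ≠ p.2)
              = ({p.1, p.2} : Finset (Fin (d+1)))ᶜ := by
            ext j
            simp [not_or]
          rw [hset, Finset.card_compl, Finset.card_pair hp', Fintype.card_fin]
          omega
        have hcard2 : (Finset.filter (fun q : Fin (d+1) × Fin (d+1) =>
            q.2 = p.1 ∧ q.1 ≠ p.2) (Dset d)).card = d - 1 := by
          have hbij : (Finset.filter (fun q : Fin (d+1) × Fin (d+1) =>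
              q.2 = p.1 ∧ q.1 ≠ p.2) (Dset d)).card
                = (Finset.univ.filter fun j : Fin (d+1) => j ≠ p.1 ∧ j ≠ p.2).card := by
            refine Finset.card_nbij' (fun q => q.1) (fun j => (j, p.1)) ?_ ?_ ?_ ?_
            · intro q hq
              obtain ⟨hqD, hq1, hq2⟩ := Finset.mem_filter.1 hq
              have hq' := mem_Dset.1 hqD
              exact Finset.mem_filter.2 ⟨Finset.mem_univ _,
                fun hh => hq' (hh.trans hq1.symm), hq2⟩
            · intro j hj
              obtain ⟨-, hj1, hj2⟩ := Finset.mem_filter.1 hj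
              exact Finset.mem_filter.2 ⟨mem_Dset.2 hj1, rfl, hj2⟩
            · intro q hq
              obtain ⟨hqD, hq1, hq2⟩ := Finset.mem_filter.1 hq
              exact Prod.ext rfl hq1.symm
            · intro j _
              rfl
          rw [hbij]
          have hset : (Finset.univ.filter fun j : Fin (d+1) => j ≠ p.1 ∧ j ≠ p.2)
              = ({p.1, p.2} : Finset (Fin (d+1)))ᶜ := by
            ext j
            simp [not_or]
          rw [hset, Finset.card_compl, Finset.card_pair hp', Fintype.card_fin]
          omega
        rw [Finset.sum_ite, Finset.sum_const_zero, add_zero, Finset.sum_const,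
          Finset.sum_ite, Finset.sum_const_zero, add_zero, Finset.sum_const,
          hcard1, hcard2, nsmul_eq_mul]
        ring
      rw [Finset.sum_congr rfl hstep, Finset.sum_const, nsmul_eq_mul]
      have hcast : ((Dset d).card : ℂ) = ((d:ℂ) + 1) * d := by
        have := card_Dset_real (d := d)
        exact_mod_cast congrArg (fun x : ℝ => (x : ℂ)) this
      have hdm : ((d - 1 : ℕ) : ℂ) = (d:ℂ) - 1 := by
        have : (1:ℕ) ≤ d := by omega
        push_cast [Nat.cast_sub this]
        ring
      rw [hcast, hdm, hX]
      push_cast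
      ring
    have hR : (∫ θ in tbox d, (phiSimplex d θ)^3)
        = ((d:ℝ)+1) * d * ((d:ℝ)-1) / 4 * (2*π)^(d+1) := by
      apply Complex.ofReal_injective
      have hcoe : ((∫ θ in tbox d, (phiSimplex d θ)^3 : ℝ) : ℂ)
          = ∫ θ in tbox d, (((phiSimplex d θ)^3 : ℝ) : ℂ) := integral_ofReal.symm
      rw [hcoe]
      simp only [Complex.ofReal_pow]
      exact hC
    have hchoose : ((Nat.choose (d+1) 3 : ℕ) : ℝ) = ((d:ℝ)+1) * d * ((d:ℝ)-1) / 6 := by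
      have h6 : ((d+1).descFactorial 3) = 6 * (d+1).choose 3 := by
        rw [Nat.descFactorial_eq_factorial_mul_choose]
        norm_num [Nat.factorial]
      have hdf : (d+1).descFactorial 3 = (d-1) * (d * (d+1)) := by
        rw [Nat.descFactorial_succ, Nat.descFactorial_succ, Nat.descFactorial_succ,
          Nat.descFactorial_zero]
        have h1 : d + 1 - 2 = d - 1 := by omega
        have h2 : d + 1 - 1 = d := by omega
        have h3 : d + 1 - 0 = d + 1 := by omega
        rw [h1, h2, h3]
        ring
      have hnat : 6 * (d+1).choose 3 = (d-1) * (d * (d+1)) := by omega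
      have h1 : (1:ℕ) ≤ d := by omega
      have hcast := congrArg (fun x : ℕ => (x : ℝ)) hnat
      push_cast [Nat.cast_sub h1] at hcast
      rw [eq_div_iff (by norm_num : (6:ℝ) ≠ 0)]
      linear_combination hcast
    rw [avgSimplex, hbox, hR, hchoose]
    field_simp
    ring
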